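/- Let a < b be reals, let 0 < α < 1, and let y : [a,b] → ℝ be continuously differentiable. Then for every x ∈ (a,b], the Riemann–Liouville fractional derivative of the shifted function y − y(a) coincides with the fractional integral of order 1−α of the derivative y′; that is, the function u ↦ (1/Γ(1−α)) ∫_a^u (u−t)^{−α} (y(t) − y(a)) dt is differentiable at x and its derivative equals (1/Γ(1−α)) ∫_a^x (x−t)^{−α} y′(t) dt. -/

import Mathlib

open Set MeasureTheory

private lemma clamp_lip (a b p q : ℝ) :
    |max a (min b p) - max a (min b q)| ≤ |p - q| := by
  calc |max a (min b p) - max a (min b q)|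
      ≤ max |a - a| |min b p - min b q| := abs_max_sub_max_le_max _ _ _ _
    _ = |min b p - min b q| := by
        rw [sub_self, abs_zero, max_eq_right (abs_nonneg _)]
    _ ≤ max |b - b| |p - q| := abs_min_sub_min_le_max _ _ _ _
    _ = |p - q| := by rw [sub_self, abs_zero, max_eq_right (abs_nonneg _)]

private lemma two_point (a b : ℝ) (y y' : ℝ → ℝ)
    (hderiv : ∀ t ∈ Set.Icc a b, HasDerivWithinAt y (y' t) (Set.Icc a b) t)
    (hcont : ContinuousOn y' (Set.Icc a b)) {ε : ℝ} (hε : 0 < ε) :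
    ∃ δ > 0, ∀ s ∈ Set.Icc a b, ∀ t ∈ Set.Icc a b, |s - t| ≤ δ →
      |y s - y t - (s - t) * y' t| ≤ ε * |s - t| := by
  have huc : UniformContinuousOn y' (Set.Icc a b) :=
    isCompact_Icc.uniformContinuousOn_of_continuous hcont
  rw [Metric.uniformContinuousOn_iff_le] at huc
  obtain ⟨δ, hδ, hδ'⟩ := huc ε hε
  refine ⟨δ, hδ, fun s hs t ht hst => ?_⟩
  have hsub : Set.uIcc s t ⊆ Set.Icc a b := Set.ordConnected_Icc.uIcc_subset hs ht
  have key : ∀ r ∈ Set.uIcc s t,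
      HasDerivWithinAt (fun r => y r - r * y' t) (y' r - y' t) (Set.uIcc s t) r := by
    intro r hr
    exact ((hderiv r (hsub hr)).mono hsub).sub
      ((hasDerivAt_mul_const (y' t)).hasDerivWithinAt)
  have bound : ∀ r ∈ Set.uIcc s t, ‖y' r - y' t‖ ≤ ε := by
    intro r hr
    rw [Real.norm_eq_abs, ← Real.dist_eq]
    apply hδ' r (hsub hr) t ht
    rw [Real.dist_eq]
    refine le_trans ?_ hst
    rcases le_total s t with h | h
    · rw [Set.uIcc_of_le h] at hr
      rw [abs_of_nonpos (by linarith [hr.2]), abs_of_nonpos (by linarith)]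
      linarith [hr.1]
    · rw [Set.uIcc_of_ge h] at hr
      rw [abs_of_nonneg (by linarith [hr.1]), abs_of_nonneg (by linarith)]
      linarith [hr.2]
  have hmvt := (convex_uIcc s t).norm_image_sub_le_of_norm_hasDerivWithin_le key bound
      Set.right_mem_uIcc Set.left_mem_uIcc
  rw [Real.norm_eq_abs, Real.norm_eq_abs] at hmvt
  calc |y s - y t - (s - t) * y' t|
      = |(y s - s * y' t) - (y t - t * y' t)| := by ring_nf
    _ ≤ ε * |s - t| := hmvt

set_option maxHeartbeats 1600000 in
/-- Let `a < b`, `0 < α < 1`, and let `y : [a,b] → ℝ` be continuously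
differentiable. Then for every `x ∈ (a,b]`, the Riemann–Liouville fractional derivative of
the shifted function `y − y(a)` equals the fractional integral of order `1−α` of `y′`:
the function `u ↦ (1/Γ(1−α)) ∫_a^u (u−t)^{−α} (y(t) − y(a)) dt` is differentiable
(within `[a,b]`) at `x` with derivative `(1/Γ(1−α)) ∫_a^x (x−t)^{−α} y′(t) dt`. -/
theorem caputo_eq_rl_of_shifted
    (a b : ℝ) (hab : a < b) (α : ℝ) (hα : 0 < α) (hα1 : α < 1)
    (y y' : ℝ → ℝ)
    (hderiv : ∀ t ∈ Set.Icc a b, HasDerivWithinAt y (y' t) (Set.Icc a b) t)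
    (hcont : ContinuousOn y' (Set.Icc a b))
    (x : ℝ) (hx : x ∈ Set.Ioc a b) :
    HasDerivWithinAt
      (fun u => (1 / Real.Gamma (1 - α)) * ∫ t in a..u, (u - t) ^ (-α) * (y t - y a))
      ((1 / Real.Gamma (1 - α)) * ∫ t in a..x, (x - t) ^ (-α) * y' t)
      (Set.Icc a b) x := by
  obtain ⟨hax, hxb⟩ := hx
  have hab' : a ≤ b := hab.le
  set c : ℝ → ℝ := fun r => max a (min b r) with hc
  have hcmem : ∀ r, c r ∈ Set.Icc a b :=
    fun r => ⟨le_max_left _ _, max_le hab' (min_le_left _ _)⟩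
  have hceq : ∀ r ∈ Set.Icc a b, c r = r := by
    intro r hr
    simp only [hc]
    rw [min_eq_right hr.2, max_eq_right hr.1]
  have hccont : Continuous c := continuous_const.max (continuous_const.min continuous_id)
  have hycont : ContinuousOn y (Set.Icc a b) := fun t ht => (hderiv t ht).continuousWithinAt
  set Y : ℝ → ℝ := fun r => y (c r) with hYdef
  have hYcont : Continuous Y := hycont.comp_continuous hccont hcmem
  obtain ⟨M0, hM0⟩ := isCompact_Icc.exists_bound_of_continuousOn hcont
  set M := max M0 0 with hMdef
  have hMnn : (0:ℝ) ≤ M := le_max_right _ _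
  have hM : ∀ t ∈ Set.Icc a b, |y' t| ≤ M := fun t ht =>
    le_trans (by rw [← Real.norm_eq_abs]; exact hM0 t ht) (le_max_left _ _)
  have hylip : ∀ p ∈ Set.Icc a b, ∀ q ∈ Set.Icc a b, |y p - y q| ≤ M * |p - q| := by
    intro p hp q hq
    have := (convex_Icc a b).norm_image_sub_le_of_norm_hasDerivWithin_le hderiv
      (fun r hr => by rw [Real.norm_eq_abs]; exact hM r hr) hq hp
    simpa [Real.norm_eq_abs] using this
  have hYlip : ∀ p q, |Y p - Y q| ≤ M * |p - q| := by
    intro p q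
    calc |Y p - Y q| ≤ M * |c p - c q| := hylip (c p) (hcmem p) (c q) (hcmem q)
      _ ≤ M * |p - q| := mul_le_mul_of_nonneg_left (clamp_lip a b p q) hMnn
  have hneg1 : (-1:ℝ) < -α := by linarith
  have hint : ∀ (h : ℝ → ℝ) (p q : ℝ), ContinuousOn h (Set.uIcc p q) →
      IntervalIntegrable (fun τ => τ ^ (-α) * h τ) volume p q := fun h p q hh =>
    (intervalIntegral.intervalIntegrable_rpow' hneg1).mul_continuousOn hh
  set G : ℝ → ℝ := fun u => ∫ τ in (0:ℝ)..(u - a), τ ^ (-α) * (Y (u - τ) - Y a) with hG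
  have hFG : ∀ u ∈ Set.Icc a b, (∫ t in a..u, (u - t) ^ (-α) * (y t - y a)) = G u := by
    intro u hu
    have h1 : Set.EqOn (fun t => (u - t) ^ (-α) * (y t - y a))
        (fun t => (fun τ => τ ^ (-α) * (Y (u - τ) - Y a)) (u - t)) (Set.uIcc a u) := by
      intro t ht
      rw [Set.uIcc_of_le hu.1] at ht
      have htab : t ∈ Set.Icc a b := ⟨ht.1, le_trans ht.2 hu.2⟩
      simp only [sub_sub_cancel, hYdef]
      rw [hceq t htab, hceq a ⟨le_refl a, hab'⟩]
    rw [intervalIntegral.integral_congr h1,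
      intervalIntegral.integral_comp_sub_left (fun τ => τ ^ (-α) * (Y (u - τ) - Y a)) u,
      sub_self]
  have hL : (∫ τ in (0:ℝ)..(x - a), τ ^ (-α) * y' (x - τ))
      = ∫ t in a..x, (x - t) ^ (-α) * y' t := by
    have h2 : (∫ t in a..x, (x - t) ^ (-α) * y' t)
        = ∫ t in a..x, (fun τ => τ ^ (-α) * y' (x - τ)) (x - t) := by
      apply intervalIntegral.integral_congr
      intro t _
      simp only [sub_sub_cancel]
    rw [h2, intervalIntegral.integral_comp_sub_left (fun τ => τ ^ (-α) * y' (x - τ)) x,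
      sub_self]
  -- the core derivative statement
  have hcore : HasDerivWithinAt G
      (∫ τ in (0:ℝ)..(x - a), τ ^ (-α) * y' (x - τ)) (Set.Icc a b) x := by
    set L : ℝ := ∫ τ in (0:ℝ)..(x - a), τ ^ (-α) * y' (x - τ) with hLdef
    rw [hasDerivWithinAt_iff_isLittleO, Asymptotics.isLittleO_iff]
    intro ε' hε'
    have hxa : 0 < x - a := by linarith
    set K := ((x - a) / 2) ^ (-α) with hK
    have hKpos : 0 < K := Real.rpow_pos_of_pos (by linarith) _
    have h1α : 0 < 1 - α := by linarith
    set C₁ := (x - a) ^ (1 - α) / (1 - α) with hC₁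
    have hC₁pos : 0 < C₁ := div_pos (Real.rpow_pos_of_pos hxa _) h1α
    set ε := ε' / (2 * (C₁ + 1)) with hε
    have hεpos : 0 < ε := by positivity
    have hεC : ε * C₁ ≤ ε' / 2 := by
      rw [hε, div_mul_eq_mul_div, div_le_div_iff₀ (by positivity) (by norm_num)]
      linarith [hε'.le]
    obtain ⟨δ₀, hδ₀, hkey⟩ := two_point a b y y' hderiv hcont hεpos
    set δ := min (min δ₀ ((x - a) / 2)) (ε' / (4 * (K * M + 1))) with hδdef
    have hδpos : 0 < δ := by
      refine lt_min (lt_min hδ₀ (by linarith)) ?_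
      positivity
    have main : ∀ u ∈ Set.Icc a b, |u - x| ≤ δ →
        ‖G u - G x - (u - x) • L‖ ≤ ε' * ‖u - x‖ := by
      intro u hu hud
      obtain ⟨hua, hub⟩ := hu
      have hud₀ : |u - x| ≤ δ₀ := le_trans hud (le_trans (min_le_left _ _) (min_le_left _ _))
      have hud₁ : |u - x| ≤ (x - a) / 2 :=
        le_trans hud (le_trans (min_le_left _ _) (min_le_right _ _))
      have hud₂ : |u - x| ≤ ε' / (4 * (K * M + 1)) := le_trans hud (min_le_right _ _)
      have hud₁' := abs_le.1 hud₁
      have hm : (x - a) / 2 ≤ u - a := by linarith [hud₁'.1]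
      have hu0 : 0 ≤ u - a := by linarith
      have hKM2 : K * M * |u - x| ≤ ε' / 4 := by
        have h3 : K * M * |u - x| ≤ K * M * (ε' / (4 * (K * M + 1))) :=
          mul_le_mul_of_nonneg_left hud₂ (mul_nonneg hKpos.le hMnn)
        have h4 : K * M * (ε' / (4 * (K * M + 1))) ≤ ε' / 4 := by
          have hq : 0 ≤ K * M := mul_nonneg hKpos.le hMnn
          have hcan : ε' / (4 * (K * M + 1)) * (4 * (K * M + 1)) = ε' :=
            div_mul_cancel₀ _ (by positivity)
          have hr : 0 ≤ ε' / (4 * (K * M + 1)) := by positivity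
          linarith [hcan, hr]
        linarith
      -- integrability facts
      have hYint : ∀ (v p q : ℝ),
          IntervalIntegrable (fun τ => τ ^ (-α) * (Y (v - τ) - Y a)) volume p q := by
        intro v p q
        apply hint
        exact ((hYcont.comp (continuous_const.sub continuous_id)).sub
          continuous_const).continuousOn
      have hy'cont : ContinuousOn (fun τ => y' (x - τ)) (Set.Icc 0 (x - a)) := by
        apply hcont.comp (continuous_const.sub continuous_id).continuousOn
        intro τ hτ
        simp only [Set.mem_Icc, id_eq, Pi.sub_apply] at hτ ⊢
        exact ⟨by linarith [hτ.2], by linarith [hτ.1]⟩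
      have hy'int : ∀ p q : ℝ, p ∈ Set.Icc (0:ℝ) (x - a) → q ∈ Set.Icc (0:ℝ) (x - a) →
          IntervalIntegrable (fun τ => τ ^ (-α) * ((u - x) * y' (x - τ))) volume p q := by
        intro p q hp hq
        apply hint
        exact continuousOn_const.mul
          (hy'cont.mono (Set.ordConnected_Icc.uIcc_subset hp hq))
      have hrpow_int : ∀ m : ℝ, 0 ≤ m →
          (∫ τ in (0:ℝ)..m, τ ^ (-α)) = m ^ (1 - α) / (1 - α) := by
        intro m _
        rw [integral_rpow (Or.inl hneg1), Real.zero_rpow (by linarith : -α + 1 ≠ 0),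
          show -α + 1 = 1 - α by ring, sub_zero]
      -- bound for the main integral term
      have hI₁ : ∀ m : ℝ, 0 ≤ m → m ≤ x - a → a ≤ u - m →
          ‖∫ τ in (0:ℝ)..m, τ ^ (-α) * (Y (u - τ) - Y (x - τ) - (u - x) * y' (x - τ))‖
            ≤ ε * C₁ * |u - x| := by
        intro m hm0 hmxa hum
        have hbd : ∀ᵐ τ ∂volume.restrict (Set.uIoc (0:ℝ) m),
            ‖τ ^ (-α) * (Y (u - τ) - Y (x - τ) - (u - x) * y' (x - τ))‖
              ≤ τ ^ (-α) * (ε * |u - x|) := by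
          refine (ae_restrict_mem measurableSet_uIoc).mono ?_
          intro τ hτ
          rw [Set.uIoc_of_le hm0] at hτ
          have hτ0 : 0 < τ := hτ.1
          have hs1 : u - τ ∈ Set.Icc a b := ⟨by linarith [hτ.2], by linarith⟩
          have hs2 : x - τ ∈ Set.Icc a b := ⟨by linarith [hτ.2], by linarith⟩
          have hY1 : Y (u - τ) = y (u - τ) := by
            simp only [hYdef]; rw [hceq _ hs1]
          have hY2 : Y (x - τ) = y (x - τ) := by
            simp only [hYdef]; rw [hceq _ hs2]
          have hE : |Y (u - τ) - Y (x - τ) - (u - x) * y' (x - τ)| ≤ ε * |u - x| := by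
            rw [hY1, hY2]
            have h5 := hkey (u - τ) hs1 (x - τ) hs2
              (by rw [show u - τ - (x - τ) = u - x by ring]; exact hud₀)
            rw [show u - τ - (x - τ) = u - x by ring] at h5
            exact h5
          rw [Real.norm_eq_abs, abs_mul, abs_of_nonneg (Real.rpow_nonneg hτ0.le _)]
          exact mul_le_mul_of_nonneg_left hE (Real.rpow_nonneg hτ0.le _)
        calc ‖∫ τ in (0:ℝ)..m, τ ^ (-α) * (Y (u - τ) - Y (x - τ) - (u - x) * y' (x - τ))‖
            ≤ |∫ τ in (0:ℝ)..m, τ ^ (-α) * (ε * |u - x|)| :=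
              intervalIntegral.norm_integral_le_abs_of_norm_le hbd
                ((intervalIntegral.intervalIntegrable_rpow' hneg1).mul_const _)
          _ = |(∫ τ in (0:ℝ)..m, τ ^ (-α)) * (ε * |u - x|)| := by
              rw [intervalIntegral.integral_mul_const]
          _ = (m ^ (1 - α) / (1 - α)) * (ε * |u - x|) := by
              rw [hrpow_int m hm0]
              exact abs_of_nonneg (mul_nonneg
                (div_nonneg (Real.rpow_nonneg hm0 _) h1α.le) (by positivity))
          _ ≤ C₁ * (ε * |u - x|) := by
              have hmm : m ^ (1 - α) / (1 - α) ≤ C₁ := by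
                rw [hC₁]
                exact div_le_div_of_nonneg_right (Real.rpow_le_rpow hm0 hmxa h1α.le) h1α.le
              exact mul_le_mul_of_nonneg_right hmm (by positivity)
          _ = ε * C₁ * |u - x| := by ring
      have hIcc0 : (0:ℝ) ∈ Set.Icc (0:ℝ) (x - a) := ⟨le_refl _, hxa.le⟩
      have hIccxa : (x - a) ∈ Set.Icc (0:ℝ) (x - a) := ⟨hxa.le, le_refl _⟩
      rcases le_total x u with hxu | hxu
      · -- case x ≤ u
        have habs : |u - x| = u - x := abs_of_nonneg (by linarith)
        have e1 : (∫ τ in (0:ℝ)..(x - a),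
              τ ^ (-α) * (Y (u - τ) - Y (x - τ) - (u - x) * y' (x - τ)))
            = (∫ τ in (0:ℝ)..(x - a), τ ^ (-α) * (Y (u - τ) - Y a))
              - (∫ τ in (0:ℝ)..(x - a), τ ^ (-α) * (Y (x - τ) - Y a))
              - (∫ τ in (0:ℝ)..(x - a), τ ^ (-α) * ((u - x) * y' (x - τ))) := by
          rw [← intervalIntegral.integral_sub (hYint u 0 (x - a)) (hYint x 0 (x - a)),
            ← intervalIntegral.integral_sub ((hYint u 0 (x - a)).sub (hYint x 0 (x - a)))
              (hy'int 0 (x - a) hIcc0 hIccxa)]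
          apply intervalIntegral.integral_congr
          intro τ _
          ring
        have e2 : G u = (∫ τ in (0:ℝ)..(x - a), τ ^ (-α) * (Y (u - τ) - Y a))
            + ∫ τ in (x - a)..(u - a), τ ^ (-α) * (Y (u - τ) - Y a) := by
          simp only [hG]
          exact (intervalIntegral.integral_add_adjacent_intervals (hYint u 0 (x - a))
            (hYint u (x - a) (u - a))).symm
        have e3 : G x = ∫ τ in (0:ℝ)..(x - a), τ ^ (-α) * (Y (x - τ) - Y a) := by
          simp only [hG]
        have e4 : (u - x) • L = ∫ τ in (0:ℝ)..(x - a), τ ^ (-α) * ((u - x) * y' (x - τ)) := by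
          rw [hLdef, smul_eq_mul, ← intervalIntegral.integral_const_mul]
          apply intervalIntegral.integral_congr
          intro τ _
          ring
        have hDeq : G u - G x - (u - x) • L =
            (∫ τ in (0:ℝ)..(x - a),
              τ ^ (-α) * (Y (u - τ) - Y (x - τ) - (u - x) * y' (x - τ)))
            + ∫ τ in (x - a)..(u - a), τ ^ (-α) * (Y (u - τ) - Y a) := by
          rw [e2, e3, e4, e1]; ring
        have hb1 := hI₁ (x - a) hxa.le (le_refl _) (by linarith)
        have hb2 : ‖∫ τ in (x - a)..(u - a), τ ^ (-α) * (Y (u - τ) - Y a)‖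
            ≤ K * (M * (u - x)) * |u - a - (x - a)| := by
          apply intervalIntegral.norm_integral_le_of_norm_le_const
          intro τ hτ
          rw [Set.uIoc_of_le (by linarith : x - a ≤ u - a)] at hτ
          have hτ1 : x - a < τ := hτ.1
          have hτ2 : τ ≤ u - a := hτ.2
          have hτpos : 0 < τ := by linarith
          have hK' : τ ^ (-α) ≤ K := by
            rw [hK]
            exact Real.rpow_le_rpow_of_nonpos (by linarith) (by linarith) (by linarith)
          have hYb : |Y (u - τ) - Y a| ≤ M * (u - x) := by
            have h6 := hYlip (u - τ) a
            have habs2 : |u - τ - a| ≤ u - x := by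
              rw [abs_of_nonneg (by linarith)]; linarith
            calc |Y (u - τ) - Y a| ≤ M * |u - τ - a| := h6
              _ ≤ M * (u - x) := mul_le_mul_of_nonneg_left habs2 hMnn
          rw [Real.norm_eq_abs, abs_mul, abs_of_nonneg (Real.rpow_nonneg hτpos.le _)]
          exact mul_le_mul hK' hYb (abs_nonneg _) hKpos.le
        rw [hDeq]
        have habs3 : |u - a - (x - a)| = u - x := by
          rw [show u - a - (x - a) = u - x by ring, habs]
        rw [habs3] at hb2
        calc ‖(∫ τ in (0:ℝ)..(x - a),
              τ ^ (-α) * (Y (u - τ) - Y (x - τ) - (u - x) * y' (x - τ)))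
            + ∫ τ in (x - a)..(u - a), τ ^ (-α) * (Y (u - τ) - Y a)‖
            ≤ ε * C₁ * |u - x| + K * (M * (u - x)) * (u - x) :=
              le_trans (norm_add_le _ _) (add_le_add hb1 hb2)
          _ ≤ ε' * ‖u - x‖ := by
              rw [Real.norm_eq_abs, habs]
              have hp : (0:ℝ) ≤ u - x := by linarith
              have hA : ε * C₁ * (u - x) ≤ ε' / 2 * (u - x) :=
                mul_le_mul_of_nonneg_right hεC hp
              have hB : K * M * (u - x) ≤ ε' / 4 := habs ▸ hKM2
              have hB' : K * M * (u - x) * (u - x) ≤ ε' / 4 * (u - x) :=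
                mul_le_mul_of_nonneg_right hB hp
              linarith [hA, hB', mul_nonneg hε'.le hp]
      · -- case u ≤ x
        have habs : |u - x| = x - u := by
          rw [abs_of_nonpos (by linarith : u - x ≤ 0)]; ring
        have hIccua : (u - a) ∈ Set.Icc (0:ℝ) (x - a) := ⟨hu0, by linarith⟩
        have e1 : (∫ τ in (0:ℝ)..(u - a),
              τ ^ (-α) * (Y (u - τ) - Y (x - τ) - (u - x) * y' (x - τ)))
            = (∫ τ in (0:ℝ)..(u - a), τ ^ (-α) * (Y (u - τ) - Y a))
              - (∫ τ in (0:ℝ)..(u - a), τ ^ (-α) * (Y (x - τ) - Y a))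
              - (∫ τ in (0:ℝ)..(u - a), τ ^ (-α) * ((u - x) * y' (x - τ))) := by
          rw [← intervalIntegral.integral_sub (hYint u 0 (u - a)) (hYint x 0 (u - a)),
            ← intervalIntegral.integral_sub ((hYint u 0 (u - a)).sub (hYint x 0 (u - a)))
              (hy'int 0 (u - a) hIcc0 hIccua)]
          apply intervalIntegral.integral_congr
          intro τ _
          ring
        have e2 : G x = (∫ τ in (0:ℝ)..(u - a), τ ^ (-α) * (Y (x - τ) - Y a))
            + ∫ τ in (u - a)..(x - a), τ ^ (-α) * (Y (x - τ) - Y a) := by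
          simp only [hG]
          exact (intervalIntegral.integral_add_adjacent_intervals (hYint x 0 (u - a))
            (hYint x (u - a) (x - a))).symm
        have e3 : G u = ∫ τ in (0:ℝ)..(u - a), τ ^ (-α) * (Y (u - τ) - Y a) := by
          simp only [hG]
        have e4 : (u - x) • L = (∫ τ in (0:ℝ)..(u - a), τ ^ (-α) * ((u - x) * y' (x - τ)))
            + ∫ τ in (u - a)..(x - a), τ ^ (-α) * ((u - x) * y' (x - τ)) := by
          have e4a : (u - x) • L
              = ∫ τ in (0:ℝ)..(x - a), τ ^ (-α) * ((u - x) * y' (x - τ)) := by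
            rw [hLdef, smul_eq_mul, ← intervalIntegral.integral_const_mul]
            apply intervalIntegral.integral_congr
            intro τ _
            ring
          rw [e4a, ← intervalIntegral.integral_add_adjacent_intervals
            (hy'int 0 (u - a) hIcc0 hIccua) (hy'int (u - a) (x - a) hIccua hIccxa)]
        have hDeq : G u - G x - (u - x) • L =
            (∫ τ in (0:ℝ)..(u - a),
              τ ^ (-α) * (Y (u - τ) - Y (x - τ) - (u - x) * y' (x - τ)))
            - ∫ τ in (u - a)..(x - a),
                (τ ^ (-α) * (Y (x - τ) - Y a) + τ ^ (-α) * ((u - x) * y' (x - τ))) := by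
          rw [e2, e3, e4, e1,
            intervalIntegral.integral_add (hYint x (u - a) (x - a))
              (hy'int (u - a) (x - a) hIccua hIccxa)]
          ring
        have hb1 := hI₁ (u - a) hu0 (by linarith) (by linarith)
        have hb2 : ‖∫ τ in (u - a)..(x - a),
              (τ ^ (-α) * (Y (x - τ) - Y a) + τ ^ (-α) * ((u - x) * y' (x - τ)))‖
            ≤ K * (2 * (M * (x - u))) * |x - a - (u - a)| := by
          apply intervalIntegral.norm_integral_le_of_norm_le_const
          intro τ hτ
          rw [Set.uIoc_of_le (by linarith : u - a ≤ x - a)] at hτ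
          have hτ1 : u - a < τ := hτ.1
          have hτ2 : τ ≤ x - a := hτ.2
          have hτpos : 0 < τ := by linarith
          have hK' : τ ^ (-α) ≤ K := by
            rw [hK]
            exact Real.rpow_le_rpow_of_nonpos (by linarith) (by linarith) (by linarith)
          have hmem : x - τ ∈ Set.Icc a b := ⟨by linarith, by linarith⟩
          have hYb : |Y (x - τ) - Y a| ≤ M * (x - u) := by
            have h6 := hYlip (x - τ) a
            have habs2 : |x - τ - a| ≤ x - u := by
              rw [abs_of_nonneg (by linarith)]; linarith
            calc |Y (x - τ) - Y a| ≤ M * |x - τ - a| := h6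
              _ ≤ M * (x - u) := mul_le_mul_of_nonneg_left habs2 hMnn
          have hy'b : |(u - x) * y' (x - τ)| ≤ (x - u) * M := by
            rw [abs_mul, show |u - x| = x - u from by
              rw [abs_of_nonpos (by linarith : u - x ≤ 0)]; ring]
            exact mul_le_mul_of_nonneg_left (hM _ hmem) (by linarith)
          calc ‖τ ^ (-α) * (Y (x - τ) - Y a) + τ ^ (-α) * ((u - x) * y' (x - τ))‖
              = |τ ^ (-α) * ((Y (x - τ) - Y a) + (u - x) * y' (x - τ))| := by
                rw [Real.norm_eq_abs]; ring_nf
            _ = τ ^ (-α) * |(Y (x - τ) - Y a) + (u - x) * y' (x - τ)| := by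
                rw [abs_mul, abs_of_nonneg (Real.rpow_nonneg hτpos.le _)]
            _ ≤ K * (2 * (M * (x - u))) := by
                apply mul_le_mul hK' _ (abs_nonneg _) hKpos.le
                calc |(Y (x - τ) - Y a) + (u - x) * y' (x - τ)|
                    ≤ |Y (x - τ) - Y a| + |(u - x) * y' (x - τ)| := abs_add_le _ _
                  _ ≤ M * (x - u) + (x - u) * M := add_le_add hYb hy'b
                  _ = 2 * (M * (x - u)) := by ring
        rw [hDeq]
        have habs3 : |x - a - (u - a)| = x - u := by
          rw [show x - a - (u - a) = x - u by ring, abs_of_nonneg (by linarith)]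
        rw [habs3] at hb2
        calc ‖(∫ τ in (0:ℝ)..(u - a),
              τ ^ (-α) * (Y (u - τ) - Y (x - τ) - (u - x) * y' (x - τ)))
            - ∫ τ in (u - a)..(x - a),
                (τ ^ (-α) * (Y (x - τ) - Y a) + τ ^ (-α) * ((u - x) * y' (x - τ)))‖
            ≤ ε * C₁ * |u - x| + K * (2 * (M * (x - u))) * (x - u) :=
              le_trans (norm_sub_le _ _) (add_le_add hb1 hb2)
          _ ≤ ε' * ‖u - x‖ := by
              rw [Real.norm_eq_abs, habs]
              have hp : (0:ℝ) ≤ x - u := by linarith [hud₁'.2]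
              have hA : ε * C₁ * (x - u) ≤ ε' / 2 * (x - u) :=
                mul_le_mul_of_nonneg_right hεC hp
              have hB : K * M * (x - u) ≤ ε' / 4 := habs ▸ hKM2
              have hB' : K * M * (x - u) * (x - u) ≤ ε' / 4 * (x - u) :=
                mul_le_mul_of_nonneg_right hB hp
              linarith [hA, hB', mul_nonneg hε'.le hp]
    have hev : ∀ᶠ u in nhdsWithin x (Set.Icc a b), |u - x| ≤ δ := by
      have h1 : Metric.closedBall x δ ∈ nhdsWithin x (Set.Icc a b) :=
        nhdsWithin_le_nhds (Metric.closedBall_mem_nhds x hδpos)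
      filter_upwards [h1] with u hu
      rw [Metric.mem_closedBall, Real.dist_eq] at hu
      exact hu
    filter_upwards [hev, self_mem_nhdsWithin] with u h1 h2
    exact main u h2 h1
  have hF : HasDerivWithinAt (fun u => ∫ t in a..u, (u - t) ^ (-α) * (y t - y a))
      (∫ t in a..x, (x - t) ^ (-α) * y' t) (Set.Icc a b) x := by
    rw [← hL]
    exact hcore.congr hFG (hFG x ⟨hax.le, hxb⟩)
  exact hF.const_mul _
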